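/- Let N ≥ 1, let S be a real symplectic 2N×2N matrix, and let λ be a real number with 0 < λ ≤ 1 such that λ is an eigenvalue of S of geometric multiplicity 1 (i.e. det(S − λ·I) = 0 and dim ker(S − λ·I) = 1). Then there exists a 2N×2N real matrix X with Xᵀ J + J X = 0 such that the derivative at t = 0 of the function t ↦ det(S · exp(t X) − λ·I) is strictly positive. -/

import Mathlib

open Matrix

section Aux

variable {ι : Type*} [Fintype ι] [DecidableEq ι]

private lemma aux_det_two_rows_smul (M : Matrix ι ι ℝ) {i j : ι} (hij : i ≠ j)
    (r : ι → ℝ) (a b : ℝ) (hMi : M i = a • r) (hMj : M j = b • r) : M.det = 0 := by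
  have h1 : M = M.updateRow i (a • r) := by rw [← hMi, Matrix.updateRow_eq_self]
  rw [h1, Matrix.det_updateRow_smul]
  have h2 : M.updateRow i r = (M.updateRow i r).updateRow j (b • r) := by
    have : (M.updateRow i r) j = b • r := by
      rw [Matrix.updateRow_ne (Ne.symm hij)]; exact hMj
    rw [← this, Matrix.updateRow_eq_self]
  rw [h2, Matrix.det_updateRow_smul]
  have h3 : ((M.updateRow i r).updateRow j r).det = 0 := by
    apply Matrix.det_zero_of_row_eq hij
    rw [Matrix.updateRow_ne hij, Matrix.updateRow_self, Matrix.updateRow_self]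
  rw [h3]; ring

private lemma aux_det_add_vecMulVec (A : Matrix ι ι ℝ) (u r : ι → ℝ) :
    (A + Matrix.vecMulVec u r).det = A.det + ∑ i, u i * (A.updateRow i r).det := by
  classical
  set B := Matrix.vecMulVec u r with hB
  have hBi : ∀ i, B i = u i • r := by
    intro i; funext k; simp [hB, Matrix.vecMulVec_apply]
  have key : (A + B).det = ∑ s : Finset ι, Matrix.det (s.piecewise B A) := by
    have h := (Matrix.detRowAlternating (n := ι) (R := ℝ)).toMultilinearMap.map_add_univ B A
    have hBA : A + B = B + A := add_comm _ _
    rw [hBA]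
    exact h
  rw [key]
  set T : Finset (Finset ι) :=
    insert (∅ : Finset ι) (Finset.univ.image fun i => ({i} : Finset ι)) with hT
  have hvanish : ∀ s ∈ Finset.univ, s ∉ T → Matrix.det (s.piecewise B A) = 0 := by
    intro s _ hs
    have h0 : s ≠ ∅ := by rintro rfl; exact hs (Finset.mem_insert_self _ _)
    have h1 : ∀ i, s ≠ {i} := by
      rintro i rfl
      exact hs (Finset.mem_insert_of_mem (Finset.mem_image.mpr ⟨i, Finset.mem_univ i, rfl⟩))
    have hcard : 1 < s.card := by
      by_contra hc
      push_neg at hc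
      interval_cases h : s.card
      · exact h0 (Finset.card_eq_zero.mp h)
      · obtain ⟨i, rfl⟩ := Finset.card_eq_one.mp h
        exact h1 i rfl
    obtain ⟨i, hi, j, hj, hij⟩ := Finset.one_lt_card.mp hcard
    exact aux_det_two_rows_smul _ hij r (u i) (u j)
      (by rw [Finset.piecewise_eq_of_mem (f := B) (g := A) _ hi]; exact hBi i)
      (by rw [Finset.piecewise_eq_of_mem (f := B) (g := A) _ hj]; exact hBi j)
  rw [← Finset.sum_subset (Finset.subset_univ T) hvanish]
  have hne : (∅ : Finset ι) ∉ Finset.univ.image fun i => ({i} : Finset ι) := by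
    simp only [Finset.mem_image, Finset.mem_univ, true_and, not_exists]
    intro x h
    exact Finset.singleton_ne_empty x (by simpa [eq_comm] using h)
  rw [hT, Finset.sum_insert hne,
    Finset.sum_image (fun a _ b _ h => Finset.singleton_injective h),
    Finset.piecewise_empty (f := B) (g := A)]
  congr 1
  refine Finset.sum_congr rfl fun i _ => ?_
  have hsing : ({i} : Finset ι).piecewise B A = A.updateRow i (u i • r) := by
    funext k
    by_cases hk : k = i
    · subst hk
      rw [Finset.piecewise_eq_of_mem (f := B) (g := A) _ (Finset.mem_singleton_self k),
        Matrix.updateRow_self]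
      exact hBi k
    · rw [Finset.piecewise_eq_of_notMem (f := B) (g := A) _ (by simpa using hk),
        Matrix.updateRow_ne hk]
  rw [hsing, Matrix.det_updateRow_smul]

private lemma aux_det_add_vecMulVec' (A : Matrix ι ι ℝ) (u r : ι → ℝ) :
    (A + Matrix.vecMulVec u r).det = A.det + (Matrix.adjugate A *ᵥ u) ⬝ᵥ r := by
  rw [aux_det_add_vecMulVec]
  congr 1
  have h1 : ∀ i, (A.updateRow i r).det = (Matrix.adjugate Aᵀ *ᵥ r) i := by
    intro i
    rw [← Matrix.cramer_transpose_apply, Matrix.cramer_eq_adjugate_mulVec]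
  simp only [h1]
  rw [← Matrix.adjugate_transpose]
  simp only [dotProduct, Matrix.mulVec, dotProduct, Matrix.transpose_apply,
    Finset.mul_sum, Finset.sum_mul]
  rw [Finset.sum_comm]
  exact Finset.sum_congr rfl fun i _ => Finset.sum_congr rfl fun j _ => by ring

private lemma aux_mul_vecMulVec (M : Matrix ι ι ℝ) (a b : ι → ℝ) :
    M * Matrix.vecMulVec a b = Matrix.vecMulVec (M *ᵥ a) b := by
  ext i j
  simp only [Matrix.mul_apply, Matrix.vecMulVec_apply, Matrix.mulVec, dotProduct]
  rw [Finset.sum_mul]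
  refine Finset.sum_congr rfl fun k _ => ?_
  ring

private lemma aux_vecMulVec_mul (a b : ι → ℝ) (M : Matrix ι ι ℝ) :
    Matrix.vecMulVec a b * M = Matrix.vecMulVec a (b ᵥ* M) := by
  ext i j
  simp only [Matrix.mul_apply, Matrix.vecMulVec_apply, Matrix.vecMul, dotProduct]
  rw [Finset.mul_sum]
  refine Finset.sum_congr rfl fun k _ => ?_
  ring

private lemma aux_vecMulVec_mul_vecMulVec (a b c d : ι → ℝ) :
    Matrix.vecMulVec a b * Matrix.vecMulVec c d = (b ⬝ᵥ c) • Matrix.vecMulVec a d := by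
  ext i j
  simp only [Matrix.mul_apply, Matrix.vecMulVec_apply, dotProduct, Matrix.smul_apply,
    smul_eq_mul, Finset.sum_mul]
  refine Finset.sum_congr rfl fun k _ => ?_
  ring

private lemma aux_vecMulVec_transpose (a b : ι → ℝ) :
    (Matrix.vecMulVec a b)ᵀ = Matrix.vecMulVec b a := by
  ext i j
  simp [Matrix.vecMulVec_apply, mul_comm]

private lemma aux_smul_vecMulVec (c : ℝ) (a b : ι → ℝ) :
    Matrix.vecMulVec (c • a) b = c • Matrix.vecMulVec a b := by
  ext i j
  simp [Matrix.vecMulVec_apply, mul_assoc]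

private lemma aux_exp_eq_one_add {X : Matrix ι ι ℝ} (h : X * X = 0) (t : ℝ) :
    NormedSpace.exp (t • X) = 1 + t • X := by
  rw [NormedSpace.exp_eq_tsum ℝ]
  show (∑' n : ℕ, ((n.factorial : ℝ))⁻¹ • (t • X) ^ n) = 1 + t • X
  have hpow : ∀ n, 2 ≤ n → (t • X) ^ n = 0 := by
    intro n hn
    obtain ⟨k, rfl⟩ := Nat.exists_eq_add_of_le hn
    rw [pow_add, pow_two, smul_mul_smul_comm, h, smul_zero, Matrix.zero_mul]
  rw [tsum_eq_sum (s := ({0, 1} : Finset ℕ))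
    (by
      intro n hn
      have h2 : 2 ≤ n := by
        simp only [Finset.mem_insert, Finset.mem_singleton] at hn
        omega
      rw [hpow n h2, smul_zero])]
  rw [Finset.sum_insert (by simp), Finset.sum_singleton]
  simp [Nat.factorial]

end Aux

/-- Let `S` be a real symplectic `2N×2N` matrix and `0 < λ ≤ 1` an
eigenvalue of `S` of geometric multiplicity `1`. Then there exists `X` in the symplectic
Lie algebra such that `d/dt|₀ det(S·exp(tX) − λI) > 0`. -/
theorem exists_symplectic_direction_det_deriv_pos
    (N : ℕ) (hN : 1 ≤ N)
    (S : Matrix (Fin N ⊕ Fin N) (Fin N ⊕ Fin N) ℝ)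
    (hS : Sᵀ * Matrix.J (Fin N) ℝ * S = Matrix.J (Fin N) ℝ)
    (lam : ℝ) (hlam0 : 0 < lam) (hlam1 : lam ≤ 1)
    (heig : ((S - lam • (1 : Matrix (Fin N ⊕ Fin N) (Fin N ⊕ Fin N) ℝ)).det = 0))
    (hgeom : Module.finrank ℝ
      ↥(LinearMap.ker (S - lam • (1 : Matrix (Fin N ⊕ Fin N) (Fin N ⊕ Fin N) ℝ)).mulVecLin)
      = 1) :
    ∃ X : Matrix (Fin N ⊕ Fin N) (Fin N ⊕ Fin N) ℝ,
      Xᵀ * Matrix.J (Fin N) ℝ + Matrix.J (Fin N) ℝ * X = 0 ∧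
      0 < deriv (fun t : ℝ =>
        (S * NormedSpace.exp (t • X)
          - lam • (1 : Matrix (Fin N ⊕ Fin N) (Fin N ⊕ Fin N) ℝ)).det) 0 := by
  classical
  set Jm := Matrix.J (Fin N) ℝ with hJm
  set A := S - lam • (1 : Matrix (Fin N ⊕ Fin N) (Fin N ⊕ Fin N) ℝ) with hA
  -- S and J have nonzero determinant
  have hSmem : S ∈ Matrix.symplecticGroup (Fin N) ℝ :=
    (SymplecticGroup.mem_iff').mpr hS
  have hdetS : IsUnit S.det := SymplecticGroup.symplectic_det hSmem
  have hdetJ : IsUnit Jm.det := Matrix.isUnit_det_J (Fin N) ℝ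
  -- kernel vectors
  obtain ⟨v, hv0, hv⟩ := Matrix.exists_mulVec_eq_zero_iff.mpr heig
  obtain ⟨w, hw0, hw⟩ := Matrix.exists_mulVec_eq_zero_iff.mpr
    (show Aᵀ.det = 0 by rw [Matrix.det_transpose]; exact heig)
  have hvker : v ∈ LinearMap.ker A.mulVecLin := by
    simpa [Matrix.mulVecLin_apply] using hv
  have hspan : ∀ x ∈ LinearMap.ker A.mulVecLin, ∃ c : ℝ, x = c • v := by
    intro x hx
    obtain ⟨c, hc⟩ :=
      (finrank_eq_one_iff_of_nonzero' (⟨v, hvker⟩ : LinearMap.ker A.mulVecLin)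
        (by simpa using hv0)).mp hgeom ⟨x, hx⟩
    exact ⟨c, by simpa using (congrArg Subtype.val hc).symm⟩
  -- adjugate decomposition
  set G := Matrix.adjugate A with hG
  have hGker : ∀ x : Fin N ⊕ Fin N → ℝ, A *ᵥ (G *ᵥ x) = 0 := by
    intro x
    rw [Matrix.mulVec_mulVec, hG, Matrix.mul_adjugate, heig]
    simp
  have hcol : ∀ x : Fin N ⊕ Fin N → ℝ, ∃ c : ℝ, G *ᵥ x = c • v := fun x =>
    hspan _ (by simpa [Matrix.mulVecLin_apply] using hGker x)
  choose g hg using fun j => hcol (Pi.single j 1)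
  have hGij : ∀ i j, G i j = g j * v i := by
    intro i j
    have h1 := congrFun (hg j) i
    simpa [Matrix.mulVec_single, mul_comm] using h1
  have hGapply : ∀ x : Fin N ⊕ Fin N → ℝ, G *ᵥ x = (g ⬝ᵥ x) • v := by
    intro x
    funext i
    simp only [Matrix.mulVec, dotProduct, Pi.smul_apply, smul_eq_mul]
    rw [Finset.sum_mul]
    refine Finset.sum_congr rfl fun j _ => ?_
    rw [hGij]; ring
  -- g ≠ 0
  have hB0det : (A + Matrix.vecMulVec w v).det ≠ 0 := by
    rw [Ne, ← Matrix.exists_mulVec_eq_zero_iff]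
    rintro ⟨x, hx0, hx⟩
    have hsplit : A *ᵥ x + (v ⬝ᵥ x) • w = 0 := by
      rw [← hx, Matrix.add_mulVec]
      congr 1
      funext i
      simp only [Matrix.mulVec, dotProduct, Matrix.vecMulVec_apply, Pi.smul_apply,
        smul_eq_mul]
      rw [Finset.sum_mul]  -- check orientation
      refine Finset.sum_congr rfl fun j _ => ?_
      ring
    have h1 : w ⬝ᵥ (A *ᵥ x) = 0 := by
      rw [Matrix.dotProduct_mulVec]
      have h2 : w ᵥ* A = 0 := by rw [← Matrix.mulVec_transpose]; exact hw
      rw [h2, zero_dotProduct]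
    have h2 : (v ⬝ᵥ x) * (w ⬝ᵥ w) = 0 := by
      have h3 := congrArg (fun y => w ⬝ᵥ y) hsplit
      simpa [dotProduct_add, dotProduct_smul, h1, smul_eq_mul, mul_comm]
        using h3
    have hww : w ⬝ᵥ w ≠ 0 := fun h => hw0 (dotProduct_self_eq_zero.mp h)
    have hvx : v ⬝ᵥ x = 0 := by
      rcases mul_eq_zero.mp h2 with h | h
      · exact h
      · exact absurd h hww
    have hAx : A *ᵥ x = 0 := by
      have := hsplit
      rw [hvx, zero_smul, add_zero] at this
      exact this
    obtain ⟨c, rfl⟩ := hspan x (by simpa [Matrix.mulVecLin_apply] using hAx)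
    have : c * (v ⬝ᵥ v) = 0 := by
      rw [← hvx]
      simp [dotProduct_smul, dotProduct_comm, smul_eq_mul]
    have hvv : v ⬝ᵥ v ≠ 0 := fun h => hv0 (dotProduct_self_eq_zero.mp h)
    rcases mul_eq_zero.mp this with h | h
    · exact hx0 (by rw [h, zero_smul])
    · exact absurd h hvv
  have hgw : (G *ᵥ w) ⬝ᵥ v ≠ 0 := by
    intro h
    apply hB0det
    rw [aux_det_add_vecMulVec' A w v, heig, ← hG, h, add_zero]
  have hgne : g ≠ 0 := by
    intro h
    apply hgw
    rw [hGapply w, h]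
    simp
  -- the vector p
  set p := (S * Jm)ᵀ *ᵥ g with hp
  have hdetSJ : ((S * Jm)ᵀ).det ≠ 0 := by
    rw [Matrix.det_transpose, Matrix.det_mul]
    exact (hdetS.mul hdetJ).ne_zero
  have hpne : p ≠ 0 := by
    intro h
    exact hdetSJ (Matrix.exists_mulVec_eq_zero_iff.mp ⟨g, hgne, h⟩)
  have hpp : p ⬝ᵥ p ≠ 0 := fun h => hpne (dotProduct_self_eq_zero.mp h)
  have hvv : v ⬝ᵥ v ≠ 0 := fun h => hv0 (dotProduct_self_eq_zero.mp h)
  -- choose z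
  obtain ⟨z, hz⟩ : ∃ z : Fin N ⊕ Fin N → ℝ, (p ⬝ᵥ z) * (v ⬝ᵥ z) ≠ 0 := by
    by_cases hpv : p ⬝ᵥ v = 0
    · refine ⟨p + v, ?_⟩
      have h1 : p ⬝ᵥ (p + v) = p ⬝ᵥ p := by
        rw [dotProduct_add, hpv, add_zero]
      have h2 : v ⬝ᵥ (p + v) = v ⬝ᵥ v := by
        rw [dotProduct_add, dotProduct_comm v p, hpv, zero_add]
      rw [h1, h2]
      exact mul_ne_zero hpp hvv
    · refine ⟨p, mul_ne_zero hpp ?_⟩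
      rw [dotProduct_comm]
      exact hpv
  set K := (p ⬝ᵥ z) * (v ⬝ᵥ z) with hK
  set X := K • Matrix.vecMulVec (Jm *ᵥ z) z with hX
  -- auxiliary J facts
  have hJz : (Jm *ᵥ z) ᵥ* Jm = z := by
    rw [← Matrix.mulVec_transpose, Matrix.J_transpose, Matrix.neg_mulVec,
      Matrix.mulVec_mulVec, Matrix.J_squared]
    rw [Matrix.neg_mulVec, Matrix.one_mulVec]  -- (-1) *ᵥ z : (-1 : Matrix) = -(1)
    simp
  have hzJz : z ⬝ᵥ (Jm *ᵥ z) = 0 := by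
    have h1 : z ⬝ᵥ (Jm *ᵥ z) = (z ᵥ* Jm) ⬝ᵥ z := Matrix.dotProduct_mulVec z Jm z
    have h2 : z ᵥ* Jm = -(Jm *ᵥ z) := by
      rw [← Matrix.mulVec_transpose, Matrix.J_transpose, Matrix.neg_mulVec]
    rw [h2, neg_dotProduct] at h1
    rw [dotProduct_comm] at h1 ⊢
    linarith
  refine ⟨X, ?_, ?_⟩
  · -- Lie algebra membership
    rw [hX, Matrix.transpose_smul, aux_vecMulVec_transpose, Matrix.smul_mul, Matrix.mul_smul,
      aux_vecMulVec_mul, aux_mul_vecMulVec, hJz, Matrix.mulVec_mulVec, Matrix.J_squared]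
    have hneg : (-1 : Matrix (Fin N ⊕ Fin N) (Fin N ⊕ Fin N) ℝ) *ᵥ z = -z := by
      rw [Matrix.neg_mulVec, Matrix.one_mulVec]
    rw [hneg]
    have hneg2 : Matrix.vecMulVec (-z) z = -Matrix.vecMulVec z z := by
      ext i j
      simp [Matrix.vecMulVec_apply]
    rw [hneg2, smul_neg, add_neg_cancel]
  · -- the derivative
    have hXX : X * X = 0 := by
      rw [hX, Matrix.smul_mul, Matrix.mul_smul, aux_vecMulVec_mul_vecMulVec, hzJz,
        zero_smul, smul_zero, smul_zero]
    have hfun : ∀ t : ℝ,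
        S * NormedSpace.exp (t • X) - lam • (1 : Matrix (Fin N ⊕ Fin N) (Fin N ⊕ Fin N) ℝ)
          = A + Matrix.vecMulVec (((t * K)) • (S *ᵥ (Jm *ᵥ z))) z := by
      intro t
      rw [aux_exp_eq_one_add hXX t, Matrix.mul_add, Matrix.mul_one]
      have hsx : S * (t • X) = Matrix.vecMulVec ((t * K) • (S *ᵥ (Jm *ᵥ z))) z := by
        rw [hX, Matrix.mul_smul, Matrix.mul_smul, aux_mul_vecMulVec, aux_smul_vecMulVec,
          smul_smul]
      rw [hsx, hA]
      abel
    have hdet : ∀ t : ℝ,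
        (S * NormedSpace.exp (t • X)
          - lam • (1 : Matrix (Fin N ⊕ Fin N) (Fin N ⊕ Fin N) ℝ)).det = t * (K * K) := by
      intro t
      have hgu : g ⬝ᵥ (S *ᵥ (Jm *ᵥ z)) = p ⬝ᵥ z := by
        rw [Matrix.mulVec_mulVec, Matrix.dotProduct_mulVec, hp, Matrix.mulVec_transpose]
      rw [hfun t, aux_det_add_vecMulVec' A _ z, heig, zero_add, ← hG,
        Matrix.mulVec_smul, hGapply, smul_smul, smul_dotProduct, hgu, smul_eq_mul, hK]
      ring
    have hfe : (fun t : ℝ =>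
        (S * NormedSpace.exp (t • X)
          - lam • (1 : Matrix (Fin N ⊕ Fin N) (Fin N ⊕ Fin N) ℝ)).det)
        = fun t : ℝ => t * (K * K) := funext hdet
    rw [hfe]
    have hd : deriv (fun t : ℝ => t * (K * K)) 0 = K * K := by
      simpa using ((hasDerivAt_id (0 : ℝ)).mul_const (K * K)).deriv
    rw [hd]
    exact mul_self_pos.mpr hz
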